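/- Let (H,f) be a symmetric bilinear lattice. The radical of the pairing L_f on G_f = H^♯/H, i.e. {[x] ∈ G_f : L_f([x],[y]) = 0 for all [y] ∈ G_f}, is isomorphic to (Ker f̂) ⊗ ℚ/ℤ, where f̂ : H → Hom(H,ℤ) is the adjoint of f. -/

import Mathlib

open scoped TensorProduct

noncomputable section

/-- ℚ/ℤ -/
abbrev QZ : Type := AddCircle (1 : ℚ)

section Lattice

variable {H : Type} [AddCommGroup H]

/-- canonical map H → ℚ ⊗ H -/
def iotaQ (H : Type) [AddCommGroup H] : H →ₗ[ℤ] ℚ ⊗[ℤ] H :=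
  TensorProduct.mk ℤ ℚ H 1

/-- the ℚ-bilinear extension of f to ℚ ⊗ H -/
def fQ (f : H →ₗ[ℤ] H →ₗ[ℤ] ℤ) : (ℚ ⊗[ℤ] H) →ₗ[ℚ] (ℚ ⊗[ℤ] H) →ₗ[ℚ] ℚ :=
  LinearMap.BilinForm.baseChange ℚ f

/-- the ℚ-linear extension of a linear form c : H → ℤ to ℚ ⊗ H -/
def cQ (c : H →ₗ[ℤ] ℤ) : (ℚ ⊗[ℤ] H) →ₗ[ℚ] ℚ :=
  LinearMap.liftBaseChange ℚ ((Int.castAddHom ℚ).toIntLinearMap ∘ₗ c)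

/-- the dual lattice H^♯ = {x ∈ ℚ⊗H : f_ℚ(x, H) ⊆ ℤ} -/
def dualLattice (f : H →ₗ[ℤ] H →ₗ[ℤ] ℤ) : AddSubgroup (ℚ ⊗[ℤ] H) where
  carrier := {x | ∀ h : H, ∃ n : ℤ, fQ f x (iotaQ H h) = (n : ℚ)}
  zero_mem' := fun h => ⟨0, by simp⟩
  add_mem' := by
    rintro x y hx hy h
    obtain ⟨n, hn⟩ := hx h
    obtain ⟨m, hm⟩ := hy h
    exact ⟨n + m, by push_cast [map_add, LinearMap.add_apply, hn, hm]; ring⟩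
  neg_mem' := by
    rintro x hx h
    obtain ⟨n, hn⟩ := hx h
    exact ⟨-n, by push_cast [map_neg, LinearMap.neg_apply, hn]; ring⟩

/-- the image of H, as a subgroup of the dual lattice -/
def latInDual (f : H →ₗ[ℤ] H →ₗ[ℤ] ℤ) : AddSubgroup (dualLattice f) :=
  ((iotaQ H).toAddMonoidHom.range).addSubgroupOf (dualLattice f)

/-- the discriminant group G_f = H^♯/H -/
def Gf (f : H →ₗ[ℤ] H →ₗ[ℤ] ℤ) : Type :=
  dualLattice f ⧸ latInDual f

instance (f : H →ₗ[ℤ] H →ₗ[ℤ] ℤ) : AddCommGroup (Gf f) :=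
  QuotientAddGroup.Quotient.addCommGroup _

/-- the discriminant quadratic function, on representatives:
φ_{f,c}(x) = (1/2)(f_ℚ(x,x) − c_ℚ(x)) mod 1 -/
def phiRep (f : H →ₗ[ℤ] H →ₗ[ℤ] ℤ) (c : H →ₗ[ℤ] ℤ) (x : dualLattice f) : QZ :=
  ((((1 : ℚ)/2) * (fQ f x x - cQ c x) : ℚ) : QZ)

/-- the (preimage in H^♯ of the) radical of L_f -/
def radSub (f : H →ₗ[ℤ] H →ₗ[ℤ] ℤ) : AddSubgroup (dualLattice f) where
  carrier := {x | ∀ y : dualLattice f, ∃ n : ℤ, fQ f x y = (n : ℚ)}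
  zero_mem' := fun y => ⟨0, by simp⟩
  add_mem' := by
    rintro x x' hx hx' y
    obtain ⟨n, hn⟩ := hx y
    obtain ⟨m, hm⟩ := hx' y
    exact ⟨n + m, by push_cast [AddSubgroup.coe_add, map_add, LinearMap.add_apply, hn, hm]; ring⟩
  neg_mem' := by
    rintro x hx y
    obtain ⟨n, hn⟩ := hx y
    exact ⟨-n, by push_cast [AddSubgroup.coe_neg, map_neg, LinearMap.neg_apply, hn]; ring⟩

end Lattice
section Aux1

open TensorProduct LinearMap Module

lemma iotaQ_apply {M : Type} [AddCommGroup M] (h : M) : iotaQ M h = (1:ℚ) ⊗ₜ[ℤ] h := rfl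

private lemma exists_int_mul (d : ℤ) (q : ℚ) (hdvd : (q.den : ℤ) ∣ d) :
    ∃ m : ℤ, (m : ℚ) = (d : ℚ) * q := by
  obtain ⟨e, rfl⟩ := hdvd
  refine ⟨e * q.num, ?_⟩
  push_cast
  rw [mul_comm ((q.den : ℚ)) (e : ℚ), mul_assoc, Rat.den_mul_eq_num]

private lemma exists_common_denom {κ : Type} [Fintype κ] (g : κ → ℚ) :
    ∃ d : ℤ, d ≠ 0 ∧ ∀ i, ∃ m : ℤ, (m : ℚ) = (d : ℚ) * g i := by
  refine ⟨∏ i, ((g i).den : ℤ), ?_,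
    fun i => exists_int_mul _ _ (Finset.dvd_prod_of_mem _ (Finset.mem_univ i))⟩
  rw [Finset.prod_ne_zero_iff]
  exact fun i _ => Int.natCast_ne_zero.mpr (g i).den_nz

private lemma iotaQ_sum_smul {M : Type} [AddCommGroup M] {κ : Type} [Fintype κ]
    (b : Basis κ ℤ M) (m : κ → ℤ) :
    iotaQ M (∑ i, m i • b i) = ∑ i, ((m i : ℤ) : ℚ) • (Algebra.TensorProduct.basis ℚ b i) := by
  simp only [iotaQ_apply, Algebra.TensorProduct.basis_apply,
    TensorProduct.tmul_sum]
  refine Finset.sum_congr rfl fun i _ => ?_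
  rw [TensorProduct.tmul_smul, Int.cast_smul_eq_zsmul]

private lemma repr_iotaQ {M : Type} [AddCommGroup M] {κ : Type} [Fintype κ]
    (b : Basis κ ℤ M) (h : M) (i : κ) :
    (Algebra.TensorProduct.basis ℚ b).repr (iotaQ M h) i = ((b.repr h i : ℤ) : ℚ) := by
  simp [iotaQ_apply, Algebra.TensorProduct.basis_repr_tmul]

private lemma iotaQ_injective (M : Type) [AddCommGroup M] [Module.Free ℤ M]
    [Module.Finite ℤ M] : Function.Injective (iotaQ M) := by
  have b := Module.Free.chooseBasis ℤ M
  intro x y hxy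
  apply b.repr.injective
  ext i
  have h := congrArg (fun t => (Algebra.TensorProduct.basis ℚ b).repr t i) hxy
  simp only [repr_iotaQ] at h
  exact_mod_cast h

private lemma exists_denom {M : Type} [AddCommGroup M] [Module.Free ℤ M] [Module.Finite ℤ M]
    (u : ℚ ⊗[ℤ] M) : ∃ d : ℤ, d ≠ 0 ∧ ∃ h : M, d • u = iotaQ M h := by
  classical
  set b := Module.Free.chooseBasis ℤ M
  set bQ := Algebra.TensorProduct.basis ℚ b with hbQ
  obtain ⟨d, hd, hm⟩ := exists_common_denom (fun i => bQ.repr u i)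
  choose m hm using hm
  refine ⟨d, hd, ∑ i, m i • b i, ?_⟩
  rw [iotaQ_sum_smul]
  calc d • u = (d : ℚ) • u := (Int.cast_smul_eq_zsmul ℚ d u).symm
    _ = (d : ℚ) • ∑ i, bQ.repr u i • bQ i := by rw [bQ.sum_repr u]
    _ = ∑ i, ((d : ℚ) * bQ.repr u i) • bQ i := by
        rw [Finset.smul_sum]; exact Finset.sum_congr rfl fun i _ => (smul_smul _ _ _)
    _ = ∑ i, ((m i : ℤ) : ℚ) • bQ i := by
        exact Finset.sum_congr rfl fun i _ => by rw [hm i]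

private lemma cQ_tmul {M : Type} [AddCommGroup M] (c : M →ₗ[ℤ] ℤ) (q : ℚ) (m : M) :
    cQ c (q ⊗ₜ[ℤ] m) = q * ((c m : ℤ) : ℚ) := by
  simp [cQ, LinearMap.liftBaseChange_tmul, smul_eq_mul]

private lemma integral_of_dual {M : Type} [AddCommGroup M] [Module.Free ℤ M] [Module.Finite ℤ M]
    (z : ℚ ⊗[ℤ] M) (hz : ∀ φ : M →ₗ[ℤ] ℤ, ∃ n : ℤ, cQ φ z = (n : ℚ)) :
    ∃ m : M, iotaQ M m = z := by
  classical
  set b := Module.Free.chooseBasis ℤ M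
  set bQ := Algebra.TensorProduct.basis ℚ b with hbQ
  have hcoord : ∀ i, cQ (b.coord i) z = bQ.repr z i := by
    intro i
    conv_lhs => rw [← bQ.sum_repr z]
    rw [map_sum]
    rw [Finset.sum_eq_single i]
    · rw [map_smul, hbQ, Algebra.TensorProduct.basis_apply, cQ_tmul]
      simp [Basis.coord_apply]
    · intro j _ hj
      rw [map_smul, hbQ, Algebra.TensorProduct.basis_apply, cQ_tmul]
      simp [Basis.coord_apply, Basis.repr_self, Finsupp.single_apply, hj]
    · intro hi; exact absurd (Finset.mem_univ i) hi
  have key : ∀ i, ∃ n : ℤ, (n : ℚ) = bQ.repr z i := by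
    intro i
    obtain ⟨n, hn⟩ := hz (b.coord i)
    exact ⟨n, by rw [← hcoord i, hn]⟩
  choose n hn using key
  refine ⟨∑ i, n i • b i, ?_⟩
  rw [iotaQ_sum_smul]
  conv_rhs => rw [← bQ.sum_repr z]
  exact Finset.sum_congr rfl fun i _ => by rw [hn i]

end Aux1
section Aux2

open TensorProduct LinearMap Module

variable {H : Type} [AddCommGroup H]

private lemma fQ_tmul (f : H →ₗ[ℤ] H →ₗ[ℤ] ℤ) (q r : ℚ) (a b : H) :
    fQ f (q ⊗ₜ[ℤ] a) (r ⊗ₜ[ℤ] b) = (f a b : ℚ) * (q * r) := by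
  simp [fQ, zsmul_eq_mul]

private lemma fQ_iota (f : H →ₗ[ℤ] H →ₗ[ℤ] ℤ) (a b : H) :
    fQ f (iotaQ H a) (iotaQ H b) = (f a b : ℚ) := by
  simp [iotaQ_apply, fQ_tmul]

private lemma fQ_symm (f : H →ₗ[ℤ] H →ₗ[ℤ] ℤ) (hf : ∀ x y, f x y = f y x)
    (x y : ℚ ⊗[ℤ] H) : fQ f x y = fQ f y x := by
  have hsymm : (fQ f).IsSymm :=
    LinearMap.BilinForm.IsSymm.baseChange ℚ ⟨fun a b => by simp [hf a b]⟩
  simpa using hsymm.eq x y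

/-- the ℚ-span of the kernel inside ℚ ⊗ H -/
private def KQ (f : H →ₗ[ℤ] H →ₗ[ℤ] ℤ) : Submodule ℚ (ℚ ⊗[ℤ] H) :=
  LinearMap.range (LinearMap.baseChange ℚ (LinearMap.ker f).subtype)

private lemma mem_KQ (f : H →ₗ[ℤ] H →ₗ[ℤ] ℤ) (q : ℚ) (k : LinearMap.ker f) :
    q ⊗ₜ[ℤ] (k : H) ∈ KQ f :=
  ⟨q ⊗ₜ k, by simp⟩

private lemma fQ_eq_zero_of_mem_ker (f : H →ₗ[ℤ] H →ₗ[ℤ] ℤ) (q : ℚ) (k : H)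
    (hk : k ∈ LinearMap.ker f) : fQ f (q ⊗ₜ[ℤ] k) = 0 := by
  apply LinearMap.ext; intro w
  rw [LinearMap.zero_apply]
  induction w using TensorProduct.induction_on with
  | zero => simp
  | tmul r b => rw [fQ_tmul]; simp [LinearMap.mem_ker.mp hk]
  | add a b ha hb => rw [map_add, ha, hb, add_zero]

private lemma fQ_eq_zero_of_mem_KQ (f : H →ₗ[ℤ] H →ₗ[ℤ] ℤ) {x : ℚ ⊗[ℤ] H}
    (hx : x ∈ KQ f) : fQ f x = 0 := by
  obtain ⟨v, rfl⟩ := hx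
  induction v using TensorProduct.induction_on with
  | zero => simp
  | tmul q k => rw [LinearMap.baseChange_tmul]; exact fQ_eq_zero_of_mem_ker f q k k.2
  | add a b ha hb => rw [map_add, map_add, ha, hb, add_zero]

variable [Module.Free ℤ H] [Module.Finite ℤ H]

private lemma mem_KQ_of_fQ_eq_zero (f : H →ₗ[ℤ] H →ₗ[ℤ] ℤ) {y : ℚ ⊗[ℤ] H}
    (hy : fQ f y = 0) : y ∈ KQ f := by
  obtain ⟨d, hd, h, hdu⟩ := exists_denom y
  have hzero : fQ f (d • y) = 0 := by rw [map_zsmul, hy, smul_zero]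
  have hhk : h ∈ LinearMap.ker f := by
    rw [LinearMap.mem_ker]
    apply LinearMap.ext; intro h'
    have hq : (f h h' : ℚ) = 0 := by
      rw [← fQ_iota f h h', ← hdu, hzero]; rfl
    exact_mod_cast hq
  have h1 : ((d : ℚ)) • y = iotaQ H h := by rw [Int.cast_smul_eq_zsmul]; exact hdu
  have h2 : y = ((d : ℚ)⁻¹) ⊗ₜ[ℤ] h := by
    have h3 : ((d : ℚ)⁻¹) • (((d : ℚ)) • y) = y := by
      rw [smul_smul, inv_mul_cancel₀ (by exact_mod_cast hd), one_smul]
    rw [← h3, h1]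
    simp [iotaQ_apply, TensorProduct.smul_tmul']
  rw [h2]
  exact mem_KQ f _ ⟨h, hhk⟩

private lemma exists_fQ_eq (f : H →ₗ[ℤ] H →ₗ[ℤ] ℤ) (hf : ∀ x y, f x y = f y x)
    (ψ : (ℚ ⊗[ℤ] H) →ₗ[ℚ] ℚ) (hψ : ∀ x ∈ KQ f, ψ x = 0) :
    ∃ y, fQ f y = ψ := by
  have hker : LinearMap.ker (fQ f) = KQ f := by
    apply le_antisymm
    · intro y hy; exact mem_KQ_of_fQ_eq_zero f (LinearMap.mem_ker.mp hy)
    · intro x hx; exact LinearMap.mem_ker.mpr (fQ_eq_zero_of_mem_KQ f hx)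
  have hle : LinearMap.range (fQ f) ≤ (KQ f).dualAnnihilator := by
    rintro _ ⟨y, rfl⟩
    rw [Submodule.mem_dualAnnihilator]
    intro w hw
    rw [fQ_symm f hf y w, fQ_eq_zero_of_mem_KQ f hw]
    rfl
  have hrank : finrank ℚ (LinearMap.range (fQ f)) = finrank ℚ ((KQ f).dualAnnihilator) := by
    have h1 := LinearMap.finrank_range_add_finrank_ker (fQ f)
    have h2 := Submodule.finrank_quotient_add_finrank (KQ f)
    have h3 := LinearEquiv.finrank_eq (Subspace.quotEquivAnnihilator (KQ f))
    rw [hker] at h1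
    omega
  have heq := Submodule.eq_of_le_of_finrank_eq hle hrank
  have hmem : ψ ∈ (KQ f).dualAnnihilator := (Submodule.mem_dualAnnihilator ψ).mpr hψ
  rw [← heq] at hmem
  exact hmem

end Aux2
section Aux3

open TensorProduct LinearMap Module

variable {H : Type} [AddCommGroup H]

private def theta0 (f : H →ₗ[ℤ] H →ₗ[ℤ] ℤ) :
    ((LinearMap.ker f) ⊗[ℤ] ℚ) →ₗ[ℤ] ℚ ⊗[ℤ] H :=
  (LinearMap.lTensor ℚ (LinearMap.ker f).subtype) ∘ₗ
    (TensorProduct.comm ℤ (LinearMap.ker f) ℚ).toLinearMap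

private lemma theta0_tmul (f : H →ₗ[ℤ] H →ₗ[ℤ] ℤ) (k : LinearMap.ker f) (q : ℚ) :
    theta0 f (k ⊗ₜ[ℤ] q) = q ⊗ₜ[ℤ] (k : H) := by
  rfl

private lemma fQ_theta0 (f : H →ₗ[ℤ] H →ₗ[ℤ] ℤ) (z : (LinearMap.ker f) ⊗[ℤ] ℚ) :
    fQ f (theta0 f z) = 0 := by
  induction z using TensorProduct.induction_on with
  | zero => simp
  | tmul k q => rw [theta0_tmul]; exact fQ_eq_zero_of_mem_ker f q k k.2
  | add a b ha hb => rw [map_add, map_add, ha, hb, add_zero]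

private lemma theta0_mem_dual (f : H →ₗ[ℤ] H →ₗ[ℤ] ℤ) (z : (LinearMap.ker f) ⊗[ℤ] ℚ) :
    theta0 f z ∈ dualLattice f :=
  fun h => ⟨0, by rw [fQ_theta0 f z]; simp⟩

private lemma theta0_mem_rad (f : H →ₗ[ℤ] H →ₗ[ℤ] ℤ) (z : (LinearMap.ker f) ⊗[ℤ] ℚ) :
    (⟨theta0 f z, theta0_mem_dual f z⟩ : dualLattice f) ∈ radSub f :=
  fun y => ⟨0, by rw [fQ_theta0 f z]; simp⟩

private def theta (f : H →ₗ[ℤ] H →ₗ[ℤ] ℤ) :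
    ((LinearMap.ker f) ⊗[ℤ] ℚ) →+ radSub f :=
  AddMonoidHom.mk' (fun z => ⟨⟨theta0 f z, theta0_mem_dual f z⟩, theta0_mem_rad f z⟩)
    (fun a b => Subtype.ext (Subtype.ext ((theta0 f).map_add a b)))

private lemma cQ_lTensor {M N : Type} [AddCommGroup M] [AddCommGroup N] (g : M →ₗ[ℤ] N)
    (φ : N →ₗ[ℤ] ℤ) (x : ℚ ⊗[ℤ] M) :
    cQ φ (LinearMap.lTensor ℚ g x) = cQ (φ ∘ₗ g) x := by
  induction x using TensorProduct.induction_on with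
  | zero => simp
  | tmul q m => simp [LinearMap.lTensor_tmul, cQ_tmul]
  | add a b ha hb => rw [map_add, map_add, map_add, ha, hb]

variable [Module.Free ℤ H] [Module.Finite ℤ H]

private lemma decomp (f : H →ₗ[ℤ] H →ₗ[ℤ] ℤ) (hf : ∀ x y, f x y = f y x) (x : ℚ ⊗[ℤ] H)
    (hrad : ∀ y : dualLattice f, ∃ n : ℤ, fQ f x (y : ℚ ⊗[ℤ] H) = (n : ℚ)) :
    ∃ (z : (LinearMap.ker f) ⊗[ℤ] ℚ) (h : H), x = theta0 f z + iotaQ H h := by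
  classical
  set K := LinearMap.ker f with hK
  haveI : NoZeroSMulDivisors ℤ (H ⧸ K) := by
    constructor
    intro n w hnw
    by_cases hn : n = 0
    · exact Or.inl hn
    · right
      obtain ⟨h, rfl⟩ := Submodule.mkQ_surjective K w
      have h1 : n • h ∈ K := by
        have hmk : K.mkQ (n • h) = 0 := by rw [map_smul]; exact hnw
        rwa [Submodule.mkQ_apply, Submodule.Quotient.mk_eq_zero] at hmk
      have h2 : h ∈ K := by
        rw [hK, LinearMap.mem_ker]
        apply LinearMap.ext; intro h'
        have := LinearMap.congr_fun (LinearMap.mem_ker.mp h1) h'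
        simp only [map_smul, LinearMap.smul_apply, LinearMap.zero_apply, smul_eq_mul] at this ⊢
        exact (mul_eq_zero.mp this).resolve_left hn
      rw [Submodule.mkQ_apply, Submodule.Quotient.mk_eq_zero]
      exact h2
  haveI : Module.Free ℤ (H ⧸ K) := Module.free_of_finite_type_torsion_free'
  obtain ⟨s, hs⟩ := Module.projective_lifting_property K.mkQ LinearMap.id
    (Submodule.mkQ_surjective K)
  set πQ : ℚ ⊗[ℤ] H →ₗ[ℤ] ℚ ⊗[ℤ] (H ⧸ K) := LinearMap.lTensor ℚ K.mkQ with hπQ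
  have hint : ∀ φ : (H ⧸ K) →ₗ[ℤ] ℤ, ∃ n : ℤ, cQ φ (πQ x) = (n : ℚ) := by
    intro φ
    have hψK : ∀ w ∈ KQ f, cQ (φ ∘ₗ K.mkQ) w = 0 := by
      rintro _ ⟨v, rfl⟩
      induction v using TensorProduct.induction_on with
      | zero => simp
      | tmul q k =>
          rw [LinearMap.baseChange_tmul, cQ_tmul]
          have hk0 : K.mkQ (k : H) = 0 := by
            rw [Submodule.mkQ_apply, Submodule.Quotient.mk_eq_zero]; exact k.2
          simp [hk0]
      | add a b ha hb => rw [map_add, map_add, ha, hb, add_zero]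
    obtain ⟨y, hy⟩ := exists_fQ_eq f hf (cQ (φ ∘ₗ K.mkQ)) hψK
    have hydual : y ∈ dualLattice f := by
      intro h
      refine ⟨φ (K.mkQ h), ?_⟩
      rw [hy]
      show cQ (φ ∘ₗ K.mkQ) ((1 : ℚ) ⊗ₜ[ℤ] h) = _
      rw [cQ_tmul]
      simp
    obtain ⟨n, hn⟩ := hrad ⟨y, hydual⟩
    refine ⟨n, ?_⟩
    calc cQ φ (πQ x) = cQ (φ ∘ₗ K.mkQ) x := cQ_lTensor K.mkQ φ x
      _ = fQ f y x := by rw [hy]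
      _ = fQ f x y := fQ_symm f hf y x
      _ = n := hn
  obtain ⟨w₀, hw₀⟩ := integral_of_dual (πQ x) hint
  set u := x - iotaQ H (s w₀) with hu
  have hπu : πQ u = 0 := by
    rw [hu, map_sub]
    have h1 : πQ (iotaQ H (s w₀)) = iotaQ (H ⧸ K) (K.mkQ (s w₀)) := by
      rfl
    have h2 : K.mkQ (s w₀) = w₀ := by
      have := LinearMap.congr_fun hs w₀
      simpa using this
    rw [h1, h2, hw₀, sub_self]
  obtain ⟨d, hd, h1, hdu⟩ := exists_denom u
  have hh1K : h1 ∈ K := by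
    have hz : iotaQ (H ⧸ K) (K.mkQ h1) = 0 := by
      have hcg := congrArg πQ hdu
      rw [map_zsmul, hπu, smul_zero] at hcg
      rw [← hcg.symm]
      rfl
    have := iotaQ_injective (H ⧸ K) (by rw [hz, map_zero] : iotaQ (H ⧸ K) (K.mkQ h1) = iotaQ (H ⧸ K) 0)
    rwa [Submodule.mkQ_apply, Submodule.Quotient.mk_eq_zero] at this
  refine ⟨(⟨h1, hh1K⟩ : K) ⊗ₜ[ℤ] ((d : ℚ)⁻¹), s w₀, ?_⟩
  have hθ : theta0 f ((⟨h1, hh1K⟩ : K) ⊗ₜ[ℤ] ((d : ℚ)⁻¹)) = u := by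
    rw [theta0_tmul]
    have h3 : ((d : ℚ)) • u = iotaQ H h1 := by rw [Int.cast_smul_eq_zsmul]; exact hdu
    have h4 : u = ((d : ℚ)⁻¹) • (((d : ℚ)) • u) := by
      rw [smul_smul, inv_mul_cancel₀ (by exact_mod_cast hd), one_smul]
    rw [h4, h3]
    simp [iotaQ_apply, TensorProduct.smul_tmul']
  rw [hθ, hu]
  abel

end Aux3
section Aux4

open TensorProduct LinearMap Module

variable {H : Type} [AddCommGroup H]

private def zmap : ℤ →ₗ[ℤ] ℚ := (Int.castAddHom ℚ).toIntLinearMap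

private def qmap : ℚ →ₗ[ℤ] QZ :=
  (QuotientAddGroup.mk' (AddSubgroup.zmultiples (1 : ℚ))).toIntLinearMap

private lemma qmap_surjective : Function.Surjective qmap :=
  QuotientAddGroup.mk'_surjective _

private lemma zq_exact : Function.Exact zmap qmap := by
  intro q
  constructor
  · intro hq
    have hmem : q ∈ AddSubgroup.zmultiples (1 : ℚ) := (QuotientAddGroup.eq_zero_iff q).mp hq
    obtain ⟨n, hn⟩ := AddSubgroup.mem_zmultiples_iff.mp hmem
    exact ⟨n, by simpa [zmap] using hn⟩
  · rintro ⟨n, rfl⟩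
    show QuotientAddGroup.mk' _ ((n : ℚ)) = 0
    exact (QuotientAddGroup.eq_zero_iff _).mpr
      (AddSubgroup.mem_zmultiples_iff.mpr ⟨n, by simp⟩)

private lemma exists_tmul_one_eq {K' : Type} [AddCommGroup K'] (w : K' ⊗[ℤ] ℤ) :
    ∃ k : K', (k ⊗ₜ[ℤ] (1 : ℚ) : K' ⊗[ℤ] ℚ) = LinearMap.lTensor K' zmap w := by
  induction w using TensorProduct.induction_on with
  | zero => exact ⟨0, by simp⟩
  | tmul k n =>
      refine ⟨n • k, ?_⟩
      rw [LinearMap.lTensor_tmul, TensorProduct.smul_tmul]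
      show k ⊗ₜ[ℤ] (n • (1 : ℚ)) = k ⊗ₜ[ℤ] (zmap n)
      have : n • (1 : ℚ) = zmap n := by simp [zmap]
      rw [this]
  | add a b ha hb =>
      obtain ⟨k1, h1⟩ := ha; obtain ⟨k2, h2⟩ := hb
      exact ⟨k1 + k2, by rw [map_add, ← h1, ← h2, TensorProduct.add_tmul]⟩

private lemma mem_latInDual_of (f : H →ₗ[ℤ] H →ₗ[ℤ] ℤ) (y : dualLattice f) (h : H)
    (hh : iotaQ H h = (y : ℚ ⊗[ℤ] H)) : y ∈ latInDual f :=
  AddSubgroup.mem_addSubgroupOf.mpr (AddMonoidHom.mem_range.mpr ⟨h, hh⟩)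

private lemma exists_of_mem_latInDual (f : H →ₗ[ℤ] H →ₗ[ℤ] ℤ) {y : dualLattice f}
    (hy : y ∈ latInDual f) : ∃ h : H, iotaQ H h = (y : ℚ ⊗[ℤ] H) :=
  AddMonoidHom.mem_range.mp (AddSubgroup.mem_addSubgroupOf.mp hy)

end Aux4

-- STATEMENT 13
theorem stmt13 {H : Type} [AddCommGroup H] [Module.Free ℤ H] [Module.Finite ℤ H]
    (f : H →ₗ[ℤ] H →ₗ[ℤ] ℤ) (hf : ∀ x y, f x y = f y x) :
    Nonempty ((radSub f ⧸ (latInDual f).addSubgroupOf (radSub f)) ≃+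
      ((LinearMap.ker f) ⊗[ℤ] QZ)) := by
  classical
  haveI flatQ : Module.Flat ℤ ℚ := IsLocalization.flat ℚ (nonZeroDivisors ℤ)
  set K := LinearMap.ker f with hK
  set α : K ⊗[ℤ] ℚ →ₗ[ℤ] K ⊗[ℤ] QZ := LinearMap.lTensor K qmap with hα
  have hαsurj : Function.Surjective α :=
    LinearMap.lTensor_surjective (K : Type) qmap_surjective
  have hTexact := lTensor_exact (K : Type) zq_exact qmap_surjective
  set N := (latInDual f).addSubgroupOf (radSub f) with hN
  set Θ : K ⊗[ℤ] ℚ →+ (radSub f ⧸ N) := (QuotientAddGroup.mk' N).comp (theta f) with hΘ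
  have hΘsurj : Function.Surjective Θ := by
    intro c
    obtain ⟨x, rfl⟩ := QuotientAddGroup.mk'_surjective N c
    obtain ⟨z, h, hzh⟩ := decomp f hf ((x : dualLattice f) : ℚ ⊗[ℤ] H) x.2
    refine ⟨z, ?_⟩
    show QuotientAddGroup.mk' N (theta f z) = QuotientAddGroup.mk' N x
    rw [QuotientAddGroup.mk'_apply, QuotientAddGroup.mk'_apply, QuotientAddGroup.eq_iff_sub_mem,
      hN, AddSubgroup.mem_addSubgroupOf]
    apply mem_latInDual_of f _ (-h)
    have hcoe : (((theta f z - x : radSub f) : dualLattice f) : ℚ ⊗[ℤ] H)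
        = theta0 f z - ((x : dualLattice f) : ℚ ⊗[ℤ] H) := rfl
    rw [map_neg, hcoe, hzh]
    abel
  have hkerchar : ∀ z : K ⊗[ℤ] ℚ, Θ z = 0 ↔ α z = 0 := by
    intro z
    have hrange : (α z = 0) ↔ ∃ k : K, (k ⊗ₜ[ℤ] (1 : ℚ) : K ⊗[ℤ] ℚ) = z := by
      constructor
      · intro h0
        obtain ⟨w, hw⟩ := (hTexact z).mp h0
        obtain ⟨k, hk⟩ := exists_tmul_one_eq w
        exact ⟨k, by rw [hk, hw]⟩
      · rintro ⟨k, rfl⟩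
        refine (hTexact _).mpr ⟨k ⊗ₜ[ℤ] (1 : ℤ), ?_⟩
        rw [LinearMap.lTensor_tmul]
        have : zmap (1 : ℤ) = (1 : ℚ) := by simp [zmap]
        rw [this]
    rw [hrange]
    constructor
    · intro h0
      have hmem : theta f z ∈ N := by
        rwa [hΘ, AddMonoidHom.comp_apply, QuotientAddGroup.mk'_apply,
          QuotientAddGroup.eq_zero_iff] at h0
      rw [hN, AddSubgroup.mem_addSubgroupOf] at hmem
      obtain ⟨h, hh'⟩ := exists_of_mem_latInDual f hmem
      have hh : iotaQ H h = theta0 f z := hh'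
      have hhK : h ∈ K := by
        rw [hK, LinearMap.mem_ker]
        apply LinearMap.ext; intro h'
        have hq : (f h h' : ℚ) = 0 := by
          rw [← fQ_iota f h h']
          have hzz : fQ f (iotaQ H h) = 0 := by rw [hh]; exact fQ_theta0 f z
          rw [hzz]; rfl
        exact_mod_cast hq
      refine ⟨⟨h, hhK⟩, ?_⟩
      have hinj : Function.Injective (LinearMap.lTensor ℚ K.subtype) :=
        Module.Flat.lTensor_preserves_injective_linearMap K.subtype
          (Submodule.injective_subtype K)
      have hcz : (TensorProduct.comm ℤ K ℚ) z = (1 : ℚ) ⊗ₜ[ℤ] (⟨h, hhK⟩ : K) := by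
        apply hinj
        have hθz : LinearMap.lTensor ℚ K.subtype ((TensorProduct.comm ℤ K ℚ) z)
            = theta0 f z := rfl
        rw [hθz, LinearMap.lTensor_tmul, ← hh]
        rfl
      have hz2 := congrArg (TensorProduct.comm ℤ K ℚ).symm hcz
      rw [LinearEquiv.symm_apply_apply] at hz2
      rw [hz2, TensorProduct.comm_symm_tmul]
    · rintro ⟨k, rfl⟩
      rw [hΘ, AddMonoidHom.comp_apply, QuotientAddGroup.mk'_apply,
        QuotientAddGroup.eq_zero_iff, hN, AddSubgroup.mem_addSubgroupOf]
      apply mem_latInDual_of f _ (k : H)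
      show iotaQ H (k : H) = theta0 f (k ⊗ₜ (1 : ℚ))
      rw [theta0_tmul]
      rfl
  have hker : Θ.ker = α.toAddMonoidHom.ker := by
    ext z
    rw [AddMonoidHom.mem_ker, AddMonoidHom.mem_ker]
    exact hkerchar z
  exact ⟨((QuotientAddGroup.quotientKerEquivOfSurjective Θ hΘsurj).symm.trans
    ((QuotientAddGroup.quotientAddEquivOfEq hker).trans
      (QuotientAddGroup.quotientKerEquivOfSurjective α.toAddMonoidHom hαsurj)))⟩
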